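/- Let A be an order, 𝔭₁,…,𝔭ₘ maximal ideals of A (with finite residue fields), and I a fractional A-ideal. Then the cardinality of I / (𝔭₁⋯𝔭ₘ·I) is at least the product ∏ᵢ #(A/𝔭ᵢ). -/

import Mathlib

open scoped TensorProduct
open Submodule

section general
variable {R M : Type*} [CommRing R] [AddCommGroup M] [Module R M]

lemma aux_card_mul (J K : Submodule R M) (h : K ≤ J) :
    Nat.card (M ⧸ K) = Nat.card (M ⧸ J) * Nat.card (↥J ⧸ K.comap J.subtype) := by
  have hker : LinearMap.ker (K.mkQ ∘ₗ J.subtype) = K.comap J.subtype := by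
    rw [LinearMap.ker_comp, Submodule.ker_mkQ]
  have hrange : LinearMap.range (K.mkQ ∘ₗ J.subtype) = J.map K.mkQ := by
    rw [LinearMap.range_comp, Submodule.range_subtype]
  have e2 := (K.mkQ ∘ₗ J.subtype).quotKerEquivRange
  rw [hker, hrange] at e2
  calc Nat.card (M ⧸ K)
      = Nat.card ↥(J.map K.mkQ) * Nat.card ((M ⧸ K) ⧸ J.map K.mkQ) :=
        Submodule.card_eq_card_quotient_mul_card _
    _ = Nat.card (M ⧸ J) * Nat.card (↥J ⧸ K.comap J.subtype) := by
        rw [mul_comm]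
        exact congrArg₂ (· * ·)
          (Nat.card_congr (Submodule.quotientQuotientEquivQuotient K J h).toEquiv)
          (Nat.card_congr e2.toEquiv.symm)

lemma aux_finite_quot_of (J K : Submodule R M) (h : K ≤ J) [Finite (M ⧸ J)]
    [hQ : Finite (↥J ⧸ K.comap J.subtype)] : Finite (M ⧸ K) := by
  have hker : LinearMap.ker (K.mkQ ∘ₗ J.subtype) = K.comap J.subtype := by
    rw [LinearMap.ker_comp, Submodule.ker_mkQ]
  have hrange : LinearMap.range (K.mkQ ∘ₗ J.subtype) = J.map K.mkQ := by
    rw [LinearMap.range_comp, Submodule.range_subtype]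
  have e2 := (K.mkQ ∘ₗ J.subtype).quotKerEquivRange
  rw [hker, hrange] at e2
  have e3 := Submodule.quotientQuotientEquivQuotient K J h
  haveI : Finite ↥((J.map K.mkQ).toAddSubgroup) := Finite.of_equiv _ e2.toEquiv
  haveI : Finite ((M ⧸ K) ⧸ (J.map K.mkQ).toAddSubgroup) := Finite.of_equiv _ e3.toEquiv.symm
  exact Nat.finite_of_card_ne_zero (by
    rw [AddSubgroup.card_eq_card_quotient_mul_card_addSubgroup (J.map K.mkQ).toAddSubgroup]
    exact mul_ne_zero Nat.card_pos.ne' Nat.card_pos.ne')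

lemma aux_map_eq (I X Y : Submodule R M) (hX : X ≤ I) :
    ((Y.comap I.subtype).comap (X.comap I.subtype).subtype).map
      (Submodule.comapSubtypeEquivOfLe hX : ↥(X.comap I.subtype) →ₗ[R] ↥X)
      = Y.comap X.subtype := by
  ext y
  simp only [Submodule.mem_map_equiv, Submodule.mem_comap,
    Submodule.comapSubtypeEquivOfLe_symm_apply]
  rfl

lemma aux_quot_card (I X Y : Submodule R M) (hX : X ≤ I) :
    Nat.card (↥(X.comap I.subtype) ⧸ (Y.comap I.subtype).comap (X.comap I.subtype).subtype)
      = Nat.card (↥X ⧸ Y.comap X.subtype) :=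
  Nat.card_congr (Submodule.Quotient.equiv _ _ (Submodule.comapSubtypeEquivOfLe hX)
    (aux_map_eq I X Y hX)).toEquiv

lemma aux_card_mul' (I X Y : Submodule R M) (hY : Y ≤ X) (hX : X ≤ I) :
    Nat.card (↥I ⧸ Y.comap I.subtype) =
      Nat.card (↥I ⧸ X.comap I.subtype) * Nat.card (↥X ⧸ Y.comap X.subtype) := by
  rw [aux_card_mul (X.comap I.subtype) (Y.comap I.subtype) (Submodule.comap_mono hY)]
  rw [aux_quot_card I X Y hX]

lemma aux_finite' (I X Y : Submodule R M) (hY : Y ≤ X) (hX : X ≤ I)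
    [Finite (↥I ⧸ X.comap I.subtype)] [hQ : Finite (↥X ⧸ Y.comap X.subtype)] :
    Finite (↥I ⧸ Y.comap I.subtype) := by
  haveI : Finite (↥(X.comap I.subtype) ⧸ (Y.comap I.subtype).comap (X.comap I.subtype).subtype) :=
    Finite.of_equiv _ (Submodule.Quotient.equiv _ _ (Submodule.comapSubtypeEquivOfLe hX)
      (aux_map_eq I X Y hX)).toEquiv.symm
  exact aux_finite_quot_of (X.comap I.subtype) (Y.comap I.subtype) (Submodule.comap_mono hY)

lemma aux_comap_subtype_smul (P : Ideal R) (I : Submodule R M) :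
    (P • I).comap I.subtype = P • (⊤ : Submodule R ↥I) := by
  have h : Submodule.map I.subtype (P • (⊤ : Submodule R ↥I)) = P • I := by
    rw [Submodule.map_smul'', Submodule.map_top, Submodule.range_subtype]
  rw [← h, Submodule.comap_map_eq_of_injective I.injective_subtype]

lemma aux_finite_quot_smul (P : Ideal R) (I : Submodule R M) (hfg : I.FG) [Finite (R ⧸ P)] :
    Finite (↥I ⧸ (P • I).comap I.subtype) := by
  rw [aux_comap_subtype_smul]
  haveI : Module.Finite R ↥I := Module.Finite.iff_fg.2 hfg
  haveI : Module.Finite (R ⧸ P) (↥I ⧸ (P • ⊤ : Submodule R ↥I)) :=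
    Module.Finite.of_restrictScalars_finite R _ _
  exact Module.finite_of_finite (R ⧸ P)

lemma aux_fg_smul (P : Ideal R) (hP : P.FG) {N : Submodule R M} (hN : N.FG) : (P • N).FG := by
  rw [Submodule.smul_eq_map₂]
  exact Submodule.FG.map₂ _ hP hN

lemma aux_card_le_quot_torsion (𝔭 : Ideal R) (hm : 𝔭.IsMaximal) (Q : Type*) [AddCommGroup Q]
    [Module R Q] [Finite Q] (hnt : Nontrivial Q) (htor : ∀ c ∈ 𝔭, ∀ q : Q, c • q = 0) :
    Nat.card (R ⧸ 𝔭) ≤ Nat.card Q := by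
  obtain ⟨v, hv⟩ := exists_ne (0 : Q)
  set f : R →ₗ[R] Q := LinearMap.toSpanSingleton R Q v with hf
  have hker : 𝔭 ≤ LinearMap.ker f := fun c hc => by
    simp only [LinearMap.mem_ker, hf, LinearMap.toSpanSingleton_apply]
    exact htor c hc v
  have hinj : Function.Injective (𝔭.liftQ f hker) := by
    intro x y hxy
    obtain ⟨a, rfl⟩ := Submodule.Quotient.mk_surjective _ x
    obtain ⟨b, rfl⟩ := Submodule.Quotient.mk_surjective _ y
    rw [Submodule.liftQ_apply, Submodule.liftQ_apply] at hxy
    rw [Submodule.Quotient.eq]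
    have h2 : (a - b) • v = 0 := by
      rw [sub_smul]
      simp only [hf, LinearMap.toSpanSingleton_apply] at hxy
      rw [hxy, sub_self]
    by_contra hab
    obtain ⟨y, i, hi, hyi⟩ := hm.exists_inv hab
    apply hv
    calc v = (y * (a - b) + i) • v := by rw [hyi, one_smul]
    _ = y • ((a - b) • v) + i • v := by rw [add_smul, mul_smul]
    _ = 0 := by rw [h2, smul_zero, htor i hi v, add_zero]
  exact Nat.card_le_card_of_injective _ hinj

lemma aux_int_mem (𝔭 : Ideal R) (h : Finite (R ⧸ 𝔭)) : ∃ k : ℤ, k ≠ 0 ∧ ((k : R) ∈ 𝔭) := by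
  haveI := Fintype.ofFinite (R ⧸ 𝔭)
  refine ⟨(Fintype.card (R ⧸ 𝔭) : ℤ), Int.natCast_ne_zero.2 Fintype.card_ne_zero, ?_⟩
  have h0 : (Ideal.Quotient.mk 𝔭) ((Fintype.card (R ⧸ 𝔭) : R)) = 0 := by
    rw [map_natCast]
    exact Nat.cast_card_eq_zero _
  have := Ideal.Quotient.eq_zero_iff_mem.mp h0
  simpa using this

end general

section order
variable {A : Type*} [CommRing A] [Module.Free ℤ A] [Module.Finite ℤ A]

lemma aux_eq_zero {r : A} {m : ℤ} (hm : m ≠ 0)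
    (h : r • (m • ((1 : A) ⊗ₜ[ℤ] (1 : ℚ))) = 0) : r = 0 := by
  have h0 : m • ((r : A) ⊗ₜ[ℤ] (1 : ℚ)) = 0 := by
    rw [smul_comm] at h
    rwa [TensorProduct.smul_tmul', smul_eq_mul, mul_one] at h
  have h1 : (r : A) ⊗ₜ[ℤ] ((m : ℚ)) = 0 := by
    rw [← TensorProduct.tmul_smul] at h0
    rwa [zsmul_eq_mul, mul_one] at h0
  have hinj : Function.Injective (LinearMap.lTensor A (Algebra.linearMap ℤ ℚ)) :=
    Module.Flat.lTensor_preserves_injective_linearMap _ fun a b hab => by simpa using hab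
  have h2 : r ⊗ₜ[ℤ] (m : ℤ) = (0 : A ⊗[ℤ] ℤ) := by
    apply hinj
    rw [map_zero, LinearMap.lTensor_tmul]
    simpa using h1
  have h3 : m • r = 0 := by
    have := congrArg (TensorProduct.rid ℤ A) h2
    rwa [map_zero, TensorProduct.rid_tmul] at this
  rcases smul_eq_zero.mp h3 with h | h
  · exact absurd h hm
  · exact h

end order

/-- If `𝔭 i` are maximal ideals of an order `A` with finite residue fields and
`I` is a fractional `A`-ideal, then `#(I / 𝔭₁⋯𝔭ₘ I) ≥ ∏ᵢ #(A/𝔭ᵢ)`. -/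
theorem stmt9 (A : Type*) [CommRing A] [Module.Free ℤ A] [Module.Finite ℤ A]
    (ι : Type*) [Fintype ι] (𝔭 : ι → Ideal A)
    (hmax : ∀ i, (𝔭 i).IsMaximal) (hfin : ∀ i, Finite (A ⧸ 𝔭 i))
    (I : Submodule A (A ⊗[ℤ] ℚ)) (hfg : I.FG)
    (hspan : ∀ x : A ⊗[ℤ] ℚ, ∃ n : ℤ, n ≠ 0 ∧ n • x ∈ I) :
    ∏ i, Nat.card (A ⧸ 𝔭 i) ≤
      Nat.card (↥I ⧸ Submodule.comap I.subtype ((∏ i, 𝔭 i) • I)) := by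
  have key : ∀ s : Finset ι, ∀ I : Submodule A (A ⊗[ℤ] ℚ), I.FG →
      (∀ x : A ⊗[ℤ] ℚ, ∃ n : ℤ, n ≠ 0 ∧ n • x ∈ I) →
      Finite (↥I ⧸ Submodule.comap I.subtype ((∏ i ∈ s, 𝔭 i) • I)) ∧
      ∏ i ∈ s, Nat.card (A ⧸ 𝔭 i) ≤
        Nat.card (↥I ⧸ Submodule.comap I.subtype ((∏ i ∈ s, 𝔭 i) • I)) := by
    intro s
    induction s using Finset.cons_induction with
    | empty =>
      intro I hfgI hspanI
      have h1 : Submodule.comap I.subtype ((∏ i ∈ (∅ : Finset ι), 𝔭 i) • I) =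
          (⊤ : Submodule A ↥I) := by
        rw [Finset.prod_empty, Ideal.one_eq_top, top_smul, Submodule.comap_subtype_self]
      rw [h1]
      haveI : Subsingleton (↥I ⧸ (⊤ : Submodule A ↥I)) :=
        Submodule.Quotient.subsingleton_iff.2 rfl
      haveI : Finite (↥I ⧸ (⊤ : Submodule A ↥I)) := Finite.of_subsingleton
      refine ⟨inferInstance, ?_⟩
      rw [Finset.prod_empty]
      exact Nat.card_pos
    | cons a t hat ih =>
      intro I hfgI hspanI
      haveI := hfin a
      set P : Ideal A := ∏ i ∈ t, 𝔭 i with hP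
      have hmul : (∏ i ∈ Finset.cons a t hat, 𝔭 i) • I = 𝔭 a • (P • I) := by
        rw [Finset.prod_cons, ← smul_eq_mul, Submodule.smul_assoc]
      rw [hmul]
      set X : Submodule A (A ⊗[ℤ] ℚ) := P • I with hX'
      set Y : Submodule A (A ⊗[ℤ] ℚ) := 𝔭 a • X with hY'
      have hY : Y ≤ X := Submodule.smul_le_right
      have hX : X ≤ I := Submodule.smul_le_right
      -- Noetherian facts
      haveI : IsNoetherian ℤ A := isNoetherian_of_isNoetherianRing_of_finite ℤ A
      haveI : IsNoetherianRing A := isNoetherian_of_tower ℤ inferInstance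
      have hfgP : P.FG := IsNoetherian.noetherian P
      have hfgX : X.FG := aux_fg_smul P hfgP hfgI
      obtain ⟨finJ, cardJ⟩ := ih I hfgI hspanI
      haveI : Finite (↥I ⧸ Submodule.comap I.subtype X) := finJ
      -- third factor
      haveI finQ : Finite (↥X ⧸ Y.comap X.subtype) := aux_finite_quot_smul (𝔭 a) X hfgX
      have hnt : Nontrivial (↥X ⧸ Y.comap X.subtype) := by
        rcases subsingleton_or_nontrivial (↥X ⧸ Y.comap X.subtype) with hs | hn
        · exfalso
          have htop : Y.comap X.subtype = ⊤ :=
            Submodule.Quotient.subsingleton_iff.1 hs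
          have hle : X ≤ Y := Submodule.comap_subtype_eq_top.1 htop
          obtain ⟨r, hr1, hr0⟩ :=
            Submodule.exists_sub_one_mem_and_smul_eq_zero_of_fg_of_le_smul (𝔭 a) X hfgX hle
          obtain ⟨n, hn0, hnI⟩ := hspanI ((1 : A) ⊗ₜ[ℤ] (1 : ℚ))
          have hPfin : ∃ k : ℤ, k ≠ 0 ∧ ((k : A) ∈ P) := by
            choose k hk0 hkmem using fun i : ι => aux_int_mem (𝔭 i) (hfin i)
            refine ⟨∏ i ∈ t, k i, Finset.prod_ne_zero_iff.2 fun i _ => hk0 i, ?_⟩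
            have hc : (((∏ i ∈ t, k i : ℤ)) : A) = ∏ i ∈ t, ((k i : ℤ) : A) := by
              push_cast; ring
            rw [hP, hc]
            exact Ideal.prod_mem_prod fun i _ => hkmem i
          obtain ⟨k, hk0, hkP⟩ := hPfin
          have hzX : ((k * n) • ((1 : A) ⊗ₜ[ℤ] (1 : ℚ))) ∈ X := by
            rw [mul_smul, ← Int.cast_smul_eq_zsmul A k, hX']
            exact Submodule.smul_mem_smul hkP hnI
          have h0' : r • ((k * n) • ((1 : A) ⊗ₜ[ℤ] (1 : ℚ))) = 0 := hr0 _ hzX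
          have hr : r = 0 := aux_eq_zero (mul_ne_zero hk0 hn0) h0'
          rw [hr, zero_sub] at hr1
          exact (hmax a).ne_top ((Ideal.eq_top_iff_one _).2 (neg_mem_iff.1 hr1))
        · exact hn
      have htor : ∀ c ∈ 𝔭 a, ∀ q : (↥X ⧸ Y.comap X.subtype), c • q = 0 := by
        intro c hc q
        obtain ⟨y, rfl⟩ := Submodule.Quotient.mk_surjective _ q
        rw [← Submodule.Quotient.mk_smul, Submodule.Quotient.mk_eq_zero]
        rw [Submodule.mem_comap, hY']
        exact Submodule.smul_mem_smul hc y.2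
      have hcard3 := aux_card_le_quot_torsion (𝔭 a) (hmax a) _ hnt htor
      haveI hFin : Finite (↥I ⧸ Y.comap I.subtype) := aux_finite' I X Y hY hX
      refine ⟨hFin, ?_⟩
      rw [aux_card_mul' I X Y hY hX, Finset.prod_cons,
        mul_comm (Nat.card (↥I ⧸ Submodule.comap I.subtype X))]
      exact Nat.mul_le_mul hcard3 cardJ
  exact (key Finset.univ I hfg hspan).2
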